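/- Let α, γ, δ₁, β₁ ∈ ℂ, and set δ = −δ₁² and β = β₁ + 2δ₁. Let U ⊆ ℂ ∖ {0} be open and let y, z : U → ℂ be holomorphic with y(x) ≠ 0 for all x ∈ U, satisfying the P_III system on U: y′ = y²z/2 + δ₁ − y/x and z′ = −y z²/2 + 2γ y + (2/x)(α + β₁/y²). Then y is twice differentiable on U and satisfies the third Painlevé equation y″ = (y′)²/y − y′/x + (α y² + β)/x + γ y³ + δ/y at every point of U. -/

import Mathlib

private lemma pIII_alg (a b x α γ δ₁ β₁ : ℂ) (ha : a ≠ 0) (hx : x ≠ 0) :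
    a * (a ^ 2 * b / 2 + δ₁ - a / x) * b
      + a ^ 2 * (-(a * b ^ 2) / 2 + 2 * γ * a + 2 / x * (α + β₁ / a ^ 2)) / 2
      - ((a ^ 2 * b / 2 + δ₁ - a / x) / x - a / x ^ 2) =
    (a ^ 2 * b / 2 + δ₁ - a / x) ^ 2 / a - (a ^ 2 * b / 2 + δ₁ - a / x) / x
      + (α * a ^ 2 + (β₁ + 2 * δ₁)) / x + γ * a ^ 3 + (-δ₁ ^ 2) / a := by
  have e1 : a ^ 2 * (-(a * b ^ 2) / 2 + 2 * γ * a + 2 / x * (α + β₁ / a ^ 2)) / 2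
      = -(a ^ 3 * b ^ 2) / 4 + γ * a ^ 3 + (α * a ^ 2 + β₁) / x := by
    field_simp [ha, hx]
    ring
  rw [e1]
  field_simp [ha, hx]
  ring

/-- If `(y, z)` is a holomorphic solution of the P_III system on an open
set `U ⊆ ℂ ∖ {0}` with `y` nowhere zero, then `y` is twice differentiable on `U` and
satisfies the third Painlevé equation with `δ = −δ₁²`, `β = β₁ + 2δ₁`. -/
theorem system_to_pIII (α γ δ₁ β₁ δ β : ℂ)
    (hδ : δ = -δ₁ ^ 2) (hβ : β = β₁ + 2 * δ₁)
    (U : Set ℂ) (hU : IsOpen U) (hU0 : (0 : ℂ) ∉ U)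
    (y z : ℂ → ℂ) (hy : DifferentiableOn ℂ y U) (hz : DifferentiableOn ℂ z U)
    (hy0 : ∀ x ∈ U, y x ≠ 0)
    (hsys1 : ∀ x ∈ U, deriv y x = (y x) ^ 2 * z x / 2 + δ₁ - y x / x)
    (hsys2 : ∀ x ∈ U, deriv z x = -(y x * (z x) ^ 2) / 2 + 2 * γ * y x
        + (2 / x) * (α + β₁ / (y x) ^ 2)) :
    DifferentiableOn ℂ (deriv y) U ∧
    ∀ x ∈ U, deriv (deriv y) x =
      (deriv y x) ^ 2 / y x - deriv y x / x + (α * (y x) ^ 2 + β) / x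
        + γ * (y x) ^ 3 + δ / y x := by
  subst hδ hβ
  have hx0 : ∀ x ∈ U, x ≠ 0 := fun x hx h => hU0 (h ▸ hx)
  have hyd : ∀ x ∈ U, DifferentiableAt ℂ y x := fun x hx =>
    (hy x hx).differentiableAt (hU.mem_nhds hx)
  have hzd : ∀ x ∈ U, DifferentiableAt ℂ z x := fun x hx =>
    (hz x hx).differentiableAt (hU.mem_nhds hx)
  set F : ℂ → ℂ := fun t => (y t) ^ 2 * z t / 2 + δ₁ - y t / t with hF
  have hFdiff : DifferentiableOn ℂ F U := by
    apply DifferentiableOn.sub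
    · exact (((hy.pow 2).mul hz).div_const 2).add_const δ₁
    · exact hy.div differentiableOn_id hx0
  have key : ∀ x ∈ U, HasDerivAt F
      (y x * deriv y x * z x + (y x) ^ 2 * deriv z x / 2
        - (deriv y x / x - y x / x ^ 2)) x := by
    intro x hx
    have hy' := (hyd x hx).hasDerivAt
    have hz' := (hzd x hx).hasDerivAt
    have hx' := hx0 x hx
    have h1 := ((((hy'.pow 2).mul hz').div_const 2).add_const δ₁).sub
      (hy'.div (hasDerivAt_id x) hx')
    refine (h1 : HasDerivAt F _ x).congr_deriv ?_
    simp only [id, Pi.pow_apply]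
    field_simp
    ring
  constructor
  · exact hFdiff.congr (fun x hx => hsys1 x hx)
  · intro x hx
    have heq : deriv y =ᶠ[nhds x] F :=
      Filter.eventuallyEq_of_mem (hU.mem_nhds hx) (fun t ht => hsys1 t ht)
    rw [heq.deriv_eq, (key x hx).deriv, hsys1 x hx, hsys2 x hx]
    exact pIII_alg (y x) (z x) x α γ δ₁ β₁ (hy0 x hx) (hx0 x hx)
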